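/- Let p be an odd prime. Then G_{p-1}(p) = ∑_{a=1}^{p-1} ∑_{b=1}^{p-1} (a+bi)^{p-1} satisfies G_{p-1}(p) ≡ 0 (mod p) in ℤ[i] if p ≡ 3 (mod 4), and G_{p-1}(p) ≡ 2 (mod p) if p ≡ 1 (mod 4). -/

import Mathlib

open Finset

lemma sum_pow_erase (p : ℕ) [Fact p.Prime] (r : ℕ) :
    ∑ x ∈ (Finset.univ : Finset (ZMod p)).erase 0, x ^ r =
      if (p - 1) ∣ r then -1 else 0 := by
  classical
  have := FiniteField.sum_pow_units (ZMod p) r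
  rw [ZMod.card p] at this
  rw [← this]
  let φ : (ZMod p)ˣ ↪ ZMod p := ⟨fun x => x, fun _ _ h => Units.ext h⟩
  have hmap : (Finset.univ : Finset (ZMod p)ˣ).map φ = Finset.univ.erase 0 := by
    ext x
    simp only [mem_map, mem_univ, true_and, mem_erase, and_true, φ,
      Function.Embedding.coeFn_mk]
    constructor
    · rintro ⟨u, rfl⟩; exact u.ne_zero
    · intro hx; exact (isUnit_iff_ne_zero.mpr hx)
  rw [← hmap, Finset.sum_map]
  rfl

lemma sum_pow_mod (p : ℕ) [Fact p.Prime] (r : ℕ) :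
    ∑ t ∈ Finset.Icc 1 (p - 1), ((t : ZMod p)) ^ r =
      if (p - 1) ∣ r then -1 else 0 := by
  have hp := (Fact.out : p.Prime)
  have hp2 := hp.two_le
  rw [← sum_pow_erase p r]
  refine Finset.sum_nbij' (fun t => ((t : ZMod p))) (fun x => x.val) ?_ ?_ ?_ ?_ ?_
  · intro t ht
    simp only [mem_Icc] at ht
    simp only [mem_erase, mem_univ, and_true]
    have h1 : (t : ZMod p).val = t := ZMod.val_natCast_of_lt (by omega)
    intro h
    rw [h, ZMod.val_zero] at h1
    omega
  · intro x hx
    simp only [mem_erase, mem_univ, and_true] at hx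
    simp only [mem_Icc]
    have := ZMod.val_lt x
    have : x.val ≠ 0 := fun h => hx (by rwa [← ZMod.val_eq_zero])
    omega
  · intro t ht
    simp only [mem_Icc] at ht
    exact ZMod.val_natCast_of_lt (by omega)
  · intro x hx
    exact ZMod.natCast_zmod_val x
    
  · intros; rfl

open Finset

noncomputable section

/-- `i` in the Gaussian integers. -/
def Ig : GaussianInt := ⟨0, 1⟩

/-- Classical power sum `S_r(N) = ∑_{t=1}^N t^r`. -/
def Sps (r N : ℕ) : ℤ := ∑ t ∈ Finset.Icc 1 N, (t : ℤ) ^ r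

/-- Gaussian power sum `F_n(k,m) = ∑_{a=1}^k ∑_{b=1}^m (a+bi)^n`. -/
def Fg (n k m : ℕ) : GaussianInt :=
  ∑ a ∈ Finset.Icc 1 k, ∑ b ∈ Finset.Icc 1 m, ((a : GaussianInt) + (b : GaussianInt) * Ig) ^ n

/-- Square Gaussian power sum `G_n(N) = F_n(N-1,N-1)`. -/
def Gg (n N : ℕ) : GaussianInt := Fg n (N - 1) (N - 1)

lemma Ig_sq : Ig ^ 2 = -1 := by
  rw [sq]
  ext <;> simp [Ig, Zsqrtd.re_mul, Zsqrtd.im_mul]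

lemma Sps_dvd (p : ℕ) [Fact p.Prime] (r : ℕ) :
    (p : ℤ) ∣ Sps r (p - 1) - (if (p - 1) ∣ r then -1 else 0) := by
  have h := sum_pow_mod p r
  rw [← ZMod.intCast_zmod_eq_zero_iff_dvd]
  push_cast [Sps]
  rw [sub_eq_zero]
  rw [← h]

-- expansion
lemma Gg_expand (p : ℕ) (hp1 : 1 ≤ p) :
    Gg (p - 1) p = ∑ j ∈ Finset.range p,
      ((Sps j (p - 1) : ℤ) : GaussianInt) * ((Sps (p - 1 - j) (p - 1) : ℤ) : GaussianInt) *
        Ig ^ (p - 1 - j) * (Nat.choose (p - 1) j : GaussianInt) := by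
  have hr : p - 1 + 1 = p := by omega
  unfold Gg Fg
  simp_rw [add_pow, mul_pow, hr]
  have h1 : ∀ a : ℕ, ∑ b ∈ Icc 1 (p-1), ∑ j ∈ range p,
      (a : GaussianInt) ^ j * ((b : GaussianInt) ^ (p-1-j) * Ig ^ (p-1-j)) * (Nat.choose (p-1) j : GaussianInt)
      = ∑ j ∈ range p, ∑ b ∈ Icc 1 (p-1),
      (a : GaussianInt) ^ j * ((b : GaussianInt) ^ (p-1-j) * Ig ^ (p-1-j)) * (Nat.choose (p-1) j : GaussianInt) :=
    fun a => Finset.sum_comm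
  simp_rw [h1]
  rw [Finset.sum_comm]
  refine Finset.sum_congr rfl fun j _ => ?_
  push_cast [Sps]
  rw [Finset.sum_mul_sum]
  simp_rw [Finset.sum_mul]
  exact Finset.sum_congr rfl fun a _ => Finset.sum_congr rfl fun b _ => by ring

end
set_option synthInstance.maxHeartbeats 1000000 in
set_option maxHeartbeats 1000000 in
theorem stmt7 (p : ℕ) (hp : p.Prime) (hodd : Odd p) :
    (p % 4 = 3 → (p : GaussianInt) ∣ Gg (p - 1) p) ∧
    (p % 4 = 1 → (p : GaussianInt) ∣ (Gg (p - 1) p - 2)) := by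
  haveI : Fact p.Prime := ⟨hp⟩
  have hp2 : 2 ≤ p := hp.two_le
  have hpne2 : p ≠ 2 := by rintro rfl; simp [Nat.odd_iff] at hodd
  have hp3 : 3 ≤ p := by omega
  set I : Ideal GaussianInt := Ideal.span {(p : GaussianInt)} with hI
  have key : (p : GaussianInt) ∣ Gg (p - 1) p - (1 + Ig ^ (p - 1)) := by
    rw [← Ideal.Quotient.eq_zero_iff_dvd, map_sub, sub_eq_zero,
      Gg_expand p (by omega), map_sum]
    have hc : ∀ r : ℕ, Ideal.Quotient.mk I ((Sps r (p - 1) : ℤ) : GaussianInt)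
        = Ideal.Quotient.mk I (((if (p - 1) ∣ r then (-1 : ℤ) else 0) : ℤ) : GaussianInt) := by
      intro r
      rw [Ideal.Quotient.mk_eq_mk_iff_sub_mem, hI, Ideal.mem_span_singleton]
      have h := map_dvd (Int.castRingHom GaussianInt) (Sps_dvd p r)
      simpa using h
    rw [← hI]
    simp_rw [map_mul, hc]
    have hsub : ({0, p - 1} : Finset ℕ) ⊆ Finset.range p := by
      intro x hx
      simp only [Finset.mem_insert, Finset.mem_singleton] at hx
      rcases hx with rfl | rfl <;> simp [Finset.mem_range] <;> omega
    rw [← Finset.sum_subset hsub]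
    · rw [Finset.sum_pair (show (0 : ℕ) ≠ p - 1 by omega)]
      have hd0 : (p - 1) ∣ 0 := dvd_zero _
      have hdd : (p - 1) ∣ (p - 1) := dvd_rfl
      simp only [Nat.sub_zero, Nat.sub_self, Nat.choose_self, Nat.choose_zero_right,
        if_pos hd0, if_pos hdd, pow_zero, Nat.cast_one, mul_one]
      rw [map_add, map_one, map_pow]
      push_cast
      rw [map_neg, map_one]
      ring
    · intro x hx hns
      simp only [Finset.mem_insert, Finset.mem_singleton, not_or] at hns
      simp only [Finset.mem_range] at hx
      have hnd : ¬ (p - 1) ∣ x := by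
        intro h
        rcases h with ⟨k, hk⟩
        rcases Nat.eq_zero_or_pos k with rfl | hk1
        · omega
        · have : p - 1 ≤ x := by
            calc p - 1 = (p-1) * 1 := by ring
            _ ≤ (p-1) * k := by exact Nat.mul_le_mul_left _ hk1
            _ = x := hk.symm
          omega
      rw [if_neg hnd]
      push_cast
      simp
  constructor
  · intro h4
    obtain ⟨k, hk⟩ : ∃ k, p = 4 * k + 3 := ⟨p / 4, by omega⟩
    have hIg : Ig ^ (p - 1) = -1 := by
      have : p - 1 = 2 * (2 * k + 1) := by omega
      rw [this, pow_mul, Ig_sq]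
      exact Odd.neg_one_pow ⟨k, by ring⟩
    rw [hIg] at key
    simpa using key
  · intro h4
    obtain ⟨k, hk⟩ : ∃ k, p = 4 * k + 1 := ⟨p / 4, by omega⟩
    have hIg : Ig ^ (p - 1) = 1 := by
      have : p - 1 = 2 * (2 * k) := by omega
      rw [this, pow_mul, Ig_sq]
      simp [pow_mul]
    rw [hIg] at key
    have : (1 : GaussianInt) + 1 = 2 := by norm_num
    rwa [this] at key
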